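/- A subset Θ ⊆ Δ satisfies ω(Θ) = Θ if and only if every γ ∈ Δ \ Θ is non-orthogonal to some element of κ(Θ) ∪ {μ₀}. Consequently, if ω(Θ) = Θ and Θ ⊆ Θ′ ⊆ Δ, then ω(Θ′) = Θ′. -/

import Mathlib

noncomputable section

open scoped RealInnerProductSpace

variable {V : Type*} [NormedAddCommGroup V] [InnerProductSpace ℝ V] [FiniteDimensional ℝ V]

/-- The reflection in the vector `γ` (as a function). -/
def sRefl (γ v : V) : V := v - (2 * ⟪v, γ⟫ / ⟪γ, γ⟫) • γ

/-- The coroot `γ∨ = 2γ/⟨γ,γ⟩` of `γ`. -/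
def coroot (γ : V) : V := (2 / ⟪γ, γ⟫) • γ

/-- The Weyl group `W`: the subgroup of linear automorphisms generated by the
reflections in the roots. -/
def weylGroup (Φ : Finset V) : Subgroup (V ≃ₗ[ℝ] V) :=
  Subgroup.closure {w : V ≃ₗ[ℝ] V | ∃ γ ∈ Φ, ∀ v, w v = sRefl γ v}

/-- `Φ_w = {γ ∈ Φ⁺ : w⁻¹ γ ∈ −Φ⁺}`. -/
def inversions (Φpos : Finset V) (w : V ≃ₗ[ℝ] V) : Set V :=
  {γ | γ ∈ Φpos ∧ -(w.symm γ) ∈ Φpos}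

/-- `ℓ(w) = #Φ_w`. -/
def len (Φpos : Finset V) (w : V ≃ₗ[ℝ] V) : ℕ := (inversions Φpos w).ncard

/-- `Φ^P = Φ ∩ span(Δ^P)`. -/
def levi (Φ ΔP : Finset V) : Set V :=
  {γ | γ ∈ Φ ∧ γ ∈ Submodule.span ℝ (ΔP : Set V)}

/-- `W_P = {w ∈ W : Φ_w ∩ Φ^P = ∅}`, the minimal length coset representatives of `W^P\W`. -/
def minimalCosetReps (Φ Φpos ΔP : Finset V) : Set (V ≃ₗ[ℝ] V) :=
  {w | w ∈ weylGroup Φ ∧ inversions Φpos w ∩ levi Φ ΔP = ∅}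

/-- `pr_S`: the orthogonal projection onto the orthogonal complement of `span S`. -/
def pr (S : Set V) (v : V) : V :=
  (Submodule.orthogonalProjectionOnto (Submodule.span ℝ S)ᗮ v : V)

/-- `Φ` is a finite (possibly non-reduced) root system spanning `V`, with base `Δ`
and associated positive system `Φpos`. -/
structure IsRootBase (Φ Δ Φpos : Finset V) : Prop where
  span_top : Submodule.span ℝ (Φ : Set V) = ⊤
  zero_not_mem : (0 : V) ∉ Φ
  refl_mem : ∀ γ ∈ Φ, ∀ δ ∈ Φ, sRefl γ δ ∈ Φ
  base_subset_pos : (Δ : Set V) ⊆ (Φpos : Set V)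
  pos_subset : (Φpos : Set V) ⊆ (Φ : Set V)
  mem_or_neg_mem : ∀ γ ∈ Φ, γ ∈ Φpos ∨ -γ ∈ Φpos
  not_mem_and_neg_mem : ∀ γ ∈ Φpos, -γ ∉ Φpos
  indep : LinearIndependent ℝ (fun x : (Δ : Set V) => (x : V))
  pos_comb : ∀ γ ∈ Φpos, ∃ c : V → ℝ, (∀ α ∈ Δ, 0 ≤ c α) ∧ γ = ∑ α ∈ Δ, c α • α

/-- A set of vectors is connected if the graph on it joining two vectors
exactly when they are non-orthogonal is connected. -/
def nonOrthConnected {V : Type*} [NormedAddCommGroup V] [InnerProductSpace ℝ V]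
    (T : Set V) : Prop :=
  ∀ x ∈ T, ∀ y ∈ T, Relation.ReflTransGen (fun a b => a ∈ T ∧ b ∈ T ∧ ⟪a, b⟫ ≠ 0) x y

/-- `Θ` is σ-connected (relative to the highest weight `μ₀`): the non-orthogonality
graph on `Θ ∪ {μ₀}` is connected. -/
def sigmaConn {V : Type*} [NormedAddCommGroup V] [InnerProductSpace ℝ V]
    (μ₀ : V) (Θ : Set V) : Prop :=
  nonOrthConnected (insert μ₀ Θ)

/-- `κ(Θ)`: the union of all σ-connected subsets of `Θ`
(the largest σ-connected subset of `Θ`). -/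
def kap {V : Type*} [NormedAddCommGroup V] [InnerProductSpace ℝ V]
    (μ₀ : V) (Θ : Set V) : Set V :=
  ⋃₀ {Υ : Set V | Υ ⊆ Θ ∧ sigmaConn μ₀ Υ}

/-- `ω(Θ)`: the union of all `Υ ⊆ Δ` with `κ(Υ) = κ(Θ)` (the largest such subset). -/
def om {V : Type*} [NormedAddCommGroup V] [InnerProductSpace ℝ V]
    (μ₀ : V) (Δ : Finset V) (Θ : Set V) : Set V :=
  ⋃₀ {Υ : Set V | Υ ⊆ (Δ : Set V) ∧ kap μ₀ Υ = kap μ₀ Θ}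

section Aux

variable (μ₀ : V)

/-- The non-orthogonality edge relation on a set `T`. -/
def nrel (T : Set V) (a b : V) : Prop := a ∈ T ∧ b ∈ T ∧ ⟪a, b⟫ ≠ 0

lemma nrel_mono {T T' : Set V} (h : T ⊆ T') {a b : V} (hab : nrel T a b) :
    nrel T' a b := ⟨h hab.1, h hab.2.1, hab.2.2⟩

lemma nrel_symm {T : Set V} : Symmetric (nrel T) := by
  rintro a b ⟨ha, hb, hab⟩
  exact ⟨hb, ha, by rwa [real_inner_comm]⟩

lemma sigmaConn_iff (Θ : Set V) :
    sigmaConn μ₀ Θ ↔ ∀ x ∈ Θ, Relation.ReflTransGen (nrel (insert μ₀ Θ)) x μ₀ := by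
  constructor
  · intro h x hx
    exact h x (Set.mem_insert_of_mem _ hx) μ₀ (Set.mem_insert _ _)
  · intro h x hx y hy
    have key : ∀ z ∈ insert μ₀ Θ, Relation.ReflTransGen (nrel (insert μ₀ Θ)) z μ₀ := by
      rintro z (rfl | hz)
      · exact Relation.ReflTransGen.refl
      · exact h z hz
    haveI : Std.Symm (nrel (insert μ₀ Θ)) := ⟨fun _ _ h => nrel_symm h⟩
    exact (key x hx).trans (Std.Symm.symm _ _ (key y hy))

/-- Characterization of `kap`: the elements of `Θ` connected to `μ₀`. -/
lemma kap_char (Θ : Set V) :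
    kap μ₀ Θ = {x | x ∈ Θ ∧ Relation.ReflTransGen (nrel (insert μ₀ Θ)) x μ₀} := by
  apply Set.Subset.antisymm
  · rintro x hx
    obtain ⟨Υ, ⟨hΥΘ, hconn⟩, hxΥ⟩ := hx
    refine ⟨hΥΘ hxΥ, ?_⟩
    have := (sigmaConn_iff μ₀ Υ).1 hconn x hxΥ
    exact Relation.ReflTransGen.mono (fun a b hab => nrel_mono (Set.insert_subset_insert hΥΘ) hab) _ _ this
  · rintro x ⟨hxΘ, hpath⟩
    set C : Set V := {y | y ∈ Θ ∧ Relation.ReflTransGen (nrel (insert μ₀ Θ)) y μ₀} with hC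
    have lift : ∀ z, Relation.ReflTransGen (nrel (insert μ₀ Θ)) z μ₀ →
        Relation.ReflTransGen (nrel (insert μ₀ C)) z μ₀ := by
      intro z hz
      induction hz using Relation.ReflTransGen.head_induction_on with
      | refl => exact Relation.ReflTransGen.refl
      | head hab hbc ih =>
        rename_i a b
        have hmem : ∀ w ∈ insert μ₀ Θ, Relation.ReflTransGen (nrel (insert μ₀ Θ)) w μ₀ →
            w ∈ insert μ₀ C := by
          rintro w (rfl | hw) hwp
          · exact Set.mem_insert _ _
          · exact Set.mem_insert_of_mem _ ⟨hw, hwp⟩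
        refine Relation.ReflTransGen.head ⟨?_, ?_, hab.2.2⟩ ih
        · exact hmem a hab.1 (Relation.ReflTransGen.head hab hbc)
        · exact hmem b hab.2.1 hbc
    refine Set.mem_sUnion.2 ⟨C, ⟨fun y hy => hy.1, ?_⟩, ⟨hxΘ, hpath⟩⟩
    refine (sigmaConn_iff μ₀ C).2 ?_
    intro y hy
    exact lift y hy.2

lemma kap_mono {Θ Θ' : Set V} (h : Θ ⊆ Θ') : kap μ₀ Θ ⊆ kap μ₀ Θ' := by
  rintro x ⟨Υ, ⟨hΥΘ, hconn⟩, hxΥ⟩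
  exact Set.mem_sUnion.2 ⟨Υ, ⟨hΥΘ.trans h, hconn⟩, hxΥ⟩

lemma kap_subset (Θ : Set V) : kap μ₀ Θ ⊆ Θ := by
  rintro x ⟨Υ, ⟨hΥΘ, _⟩, hxΥ⟩; exact hΥΘ hxΥ

/-- The general criterion, for any `Θ ⊆ Δ`. -/
lemma sigmaSaturated_crit (hμ₀ : μ₀ ≠ 0) (Δ : Finset V) (Θ : Set V) (hΘ : Θ ⊆ (Δ : Set V)) :
    om μ₀ Δ Θ = Θ ↔
      ∀ γ ∈ (Δ : Set V) \ Θ, ∃ x ∈ insert μ₀ (kap μ₀ Θ), ⟪γ, x⟫ ≠ 0 := by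
  constructor
  · intro hom γ hγ
    by_contra hcon
    push_neg at hcon
    have hγΘ : γ ∉ Θ := hγ.2
    have hγμ : ⟪γ, μ₀⟫ = 0 := hcon μ₀ (Set.mem_insert _ _)
    have hγne : γ ≠ μ₀ := by
      rintro rfl
      exact hμ₀ (inner_self_eq_zero.1 hγμ)
    -- every path from x to μ₀ in insert μ₀ (Θ ∪ {γ}) avoids γ
    have Q : ∀ x, Relation.ReflTransGen (nrel (insert μ₀ (Θ ∪ {γ}))) x μ₀ →
        x ≠ γ ∧ Relation.ReflTransGen (nrel (insert μ₀ Θ)) x μ₀ := by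
      intro x hx
      induction hx using Relation.ReflTransGen.head_induction_on with
      | refl => exact ⟨fun h => hγne h.symm, Relation.ReflTransGen.refl⟩
      | head hab hbc ih =>
        rename_i a b
        obtain ⟨hbγ, hbpath⟩ := ih
        have haγ : a ≠ γ := by
          rintro rfl
          rcases hab.2.1 with hb | hb
          · exact hab.2.2 (hb ▸ hγμ)
          · rcases hb with hb | hb
            · have : b ∈ kap μ₀ Θ := by
                rw [kap_char]; exact ⟨hb, hbpath⟩
              exact hab.2.2 (hcon b (Set.mem_insert_of_mem _ this))
            · exact hbγ hb
        have hamem : a ∈ insert μ₀ Θ := by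
          rcases hab.1 with ha | ha
          · exact ha ▸ Set.mem_insert _ _
          · rcases ha with ha | ha
            · exact Set.mem_insert_of_mem _ ha
            · exact absurd ha haγ
        have hbmem : b ∈ insert μ₀ Θ := by
          rcases hab.2.1 with hb | hb
          · exact hb ▸ Set.mem_insert _ _
          · rcases hb with hb | hb
            · exact Set.mem_insert_of_mem _ hb
            · exact absurd hb hbγ
        exact ⟨haγ, Relation.ReflTransGen.head ⟨hamem, hbmem, hab.2.2⟩ hbpath⟩
    have hkap : kap μ₀ (Θ ∪ {γ}) = kap μ₀ Θ := by
      apply Set.Subset.antisymm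
      · intro x hx
        rw [kap_char] at hx ⊢
        obtain ⟨hxmem, hxpath⟩ := hx
        obtain ⟨hxγ, hxpath'⟩ := Q x hxpath
        rcases hxmem with hx | hx
        · exact ⟨hx, hxpath'⟩
        · exact absurd hx hxγ
      · exact kap_mono μ₀ Set.subset_union_left
    have : Θ ∪ {γ} ⊆ om μ₀ Δ Θ :=
      Set.subset_sUnion_of_mem ⟨Set.union_subset hΘ (Set.singleton_subset_iff.2 hγ.1), hkap⟩
    rw [hom] at this
    exact hγΘ (this (Set.mem_union_right _ rfl))
  · intro H
    apply Set.Subset.antisymm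
    · rintro γ ⟨Υ, ⟨hΥΔ, hkapeq⟩, hγΥ⟩
      by_contra hγΘ
      obtain ⟨x, hx, hne⟩ := H γ ⟨hΥΔ hγΥ, hγΘ⟩
      have hγkap : γ ∈ kap μ₀ Υ := by
        rw [kap_char]
        refine ⟨hγΥ, ?_⟩
        rcases hx with rfl | hx
        · exact Relation.ReflTransGen.single
            ⟨Set.mem_insert_of_mem _ hγΥ, Set.mem_insert _ _, hne⟩
        · rw [← hkapeq] at hx
          rw [kap_char] at hx
          exact Relation.ReflTransGen.head
            ⟨Set.mem_insert_of_mem _ hγΥ, Set.mem_insert_of_mem _ hx.1, hne⟩ hx.2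
      rw [hkapeq] at hγkap
      exact hγΘ (kap_subset μ₀ Θ hγkap)
    · exact Set.subset_sUnion_of_mem ⟨hΘ, rfl⟩

end Aux

/-- equation (eqnSigmaSaturatedCondition) of the paper and the
heredity of σ-saturation to supersets. `ω(Θ) = Θ` iff every `γ ∈ Δ \ Θ` is
non-orthogonal to some element of `κ(Θ) ∪ {μ₀}`; consequently, if `ω(Θ) = Θ`
and `Θ ⊆ Θ′ ⊆ Δ` then `ω(Θ′) = Θ′`. -/
theorem sigmaSaturatedCriterion
    {V : Type*} [NormedAddCommGroup V] [InnerProductSpace ℝ V] [FiniteDimensional ℝ V]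
    (Φ Δ Φpos : Finset V) (h : IsRootBase Φ Δ Φpos)
    (μ₀ : V) (hμ₀ : μ₀ ≠ 0) (hdom : ∀ α ∈ Δ, 0 ≤ ⟪μ₀, coroot α⟫)
    (Θ : Set V) (hΘ : Θ ⊆ (Δ : Set V)) :
    (om μ₀ Δ Θ = Θ ↔
      ∀ γ ∈ (Δ : Set V) \ Θ, ∃ x ∈ insert μ₀ (kap μ₀ Θ), ⟪γ, x⟫ ≠ 0) ∧
    (∀ Θ' : Set V, om μ₀ Δ Θ = Θ → Θ ⊆ Θ' → Θ' ⊆ (Δ : Set V) → om μ₀ Δ Θ' = Θ') := by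
  refine ⟨sigmaSaturated_crit μ₀ hμ₀ Δ Θ hΘ, ?_⟩
  intro Θ' hom hΘΘ' hΘ'Δ
  refine (sigmaSaturated_crit μ₀ hμ₀ Δ Θ' hΘ'Δ).2 ?_
  intro γ hγ
  obtain ⟨x, hx, hne⟩ := (sigmaSaturated_crit μ₀ hμ₀ Δ Θ hΘ).1 hom γ
    ⟨hγ.1, fun hc => hγ.2 (hΘΘ' hc)⟩
  refine ⟨x, ?_, hne⟩
  rcases hx with rfl | hx
  · exact Set.mem_insert _ _
  · exact Set.mem_insert_of_mem _ (kap_mono μ₀ hΘΘ' hx)
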